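/- Let (A, B) be a separating pair of continuous aggregation functions on [0,1]². Then for all α, β ∈ Ĩ, 0 ≤ ϱ_{A,B}(α, β) ≤ 1, and ϱ_{A,B}(α, β) = 0 if and only if α = β. -/
import Mathlib


/-- The set of intuitionistic fuzzy values (IFVs). -/
def Itilde : Set (ℝ × ℝ) :=
  {p | 0 ≤ p.1 ∧ p.1 ≤ 1 ∧ 0 ≤ p.2 ∧ p.2 ≤ 1 ∧ p.1 + p.2 ≤ 1}

/-- An aggregation function on `[0,1]²`. -/
structure IsAggregation (A : ℝ → ℝ → ℝ) : Prop where
  mapsTo : ∀ x y, x ∈ Set.Icc (0 : ℝ) 1 → y ∈ Set.Icc (0 : ℝ) 1 →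
    A x y ∈ Set.Icc (0 : ℝ) 1
  mono_left : ∀ x₁ x₂ y, x₁ ∈ Set.Icc (0 : ℝ) 1 → x₂ ∈ Set.Icc (0 : ℝ) 1 →
    y ∈ Set.Icc (0 : ℝ) 1 → x₁ ≤ x₂ → A x₁ y ≤ A x₂ y
  mono_right : ∀ x y₁ y₂, x ∈ Set.Icc (0 : ℝ) 1 → y₁ ∈ Set.Icc (0 : ℝ) 1 →
    y₂ ∈ Set.Icc (0 : ℝ) 1 → y₁ ≤ y₂ → A x y₁ ≤ A x y₂
  zero : A 0 0 = 0
  one : A 1 1 = 1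

/-- `Ā(α) = A(μ_α, 1 - ν_α)`. -/
def aggBar (A : ℝ → ℝ → ℝ) (p : ℝ × ℝ) : ℝ := A p.1 (1 - p.2)

/-- The distance measure `ϱ_{A,B}`. -/
noncomputable def vrhoAB (A B : ℝ → ℝ → ℝ) (a b : ℝ × ℝ) : ℝ :=
  if aggBar A a ≠ aggBar A b then (1 + |aggBar A a - aggBar A b|) / 2
  else |aggBar B a - aggBar B b| / 2

/-- For a separating pair `(A, B)` of continuous aggregation functions and all
`α, β ∈ Ĩ`: `0 ≤ ϱ_{A,B}(α, β) ≤ 1`, and `ϱ_{A,B}(α, β) = 0` iff `α = β`. -/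
theorem vrhoAB_nonneg_le_one_and_eq_zero_iff (A B : ℝ → ℝ → ℝ)
    (hA : IsAggregation A) (hB : IsAggregation B)
    (hAc : ContinuousOn (fun p : ℝ × ℝ => A p.1 p.2)
      (Set.Icc (0 : ℝ) 1 ×ˢ Set.Icc (0 : ℝ) 1))
    (hBc : ContinuousOn (fun p : ℝ × ℝ => B p.1 p.2)
      (Set.Icc (0 : ℝ) 1 ×ˢ Set.Icc (0 : ℝ) 1))
    (hsep : ∀ x₁ y₁ x₂ y₂, x₁ ∈ Set.Icc (0 : ℝ) 1 → y₁ ∈ Set.Icc (0 : ℝ) 1 →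
      x₂ ∈ Set.Icc (0 : ℝ) 1 → y₂ ∈ Set.Icc (0 : ℝ) 1 →
      A x₁ y₁ = A x₂ y₂ → B x₁ y₁ = B x₂ y₂ → x₁ = x₂ ∧ y₁ = y₂)
    (a b : ℝ × ℝ) (ha : a ∈ Itilde) (hb : b ∈ Itilde) :
    0 ≤ vrhoAB A B a b ∧ vrhoAB A B a b ≤ 1 ∧ (vrhoAB A B a b = 0 ↔ a = b) := by
  obtain ⟨ha1, ha2, ha3, ha4, ha5⟩ := ha
  obtain ⟨hb1, hb2, hb3, hb4, hb5⟩ := hb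
  have hax : a.1 ∈ Set.Icc (0:ℝ) 1 := ⟨ha1, ha2⟩
  have hay : 1 - a.2 ∈ Set.Icc (0:ℝ) 1 := ⟨by linarith, by linarith⟩
  have hbx : b.1 ∈ Set.Icc (0:ℝ) 1 := ⟨hb1, hb2⟩
  have hby : 1 - b.2 ∈ Set.Icc (0:ℝ) 1 := ⟨by linarith, by linarith⟩
  have hAa := hA.mapsTo a.1 (1 - a.2) hax hay
  have hAb := hA.mapsTo b.1 (1 - b.2) hbx hby
  unfold vrhoAB aggBar
  by_cases h : A a.1 (1 - a.2) = A b.1 (1 - b.2)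
  · simp only [h, ne_eq, not_true_eq_false, if_false, if_neg (not_not.mpr rfl)]
    have hBa := hB.mapsTo a.1 (1 - a.2) hax hay
    have hBb := hB.mapsTo b.1 (1 - b.2) hbx hby
    refine ⟨by positivity, ?_, ?_⟩
    · have : |B a.1 (1 - a.2) - B b.1 (1 - b.2)| ≤ 1 := by
        rw [abs_sub_le_iff]; constructor <;> linarith [hBa.1, hBa.2, hBb.1, hBb.2]
      linarith
    · constructor
      · intro h0
        have : B a.1 (1 - a.2) = B b.1 (1 - b.2) := by
          have := abs_eq_zero.mp (by linarith : |B a.1 (1 - a.2) - B b.1 (1 - b.2)| = 0)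
          linarith
        obtain ⟨e1, e2⟩ := hsep a.1 (1 - a.2) b.1 (1 - b.2) hax hay hbx hby h this
        have : a.2 = b.2 := by linarith
        exact Prod.ext e1 this
      · intro h0; rw [h0]; simp
  · rw [if_pos h]
    have habs : |A a.1 (1 - a.2) - A b.1 (1 - b.2)| ≤ 1 := by
      rw [abs_sub_le_iff]; constructor <;> linarith [hAa.1, hAa.2, hAb.1, hAb.2]
    have hpos : 0 < |A a.1 (1 - a.2) - A b.1 (1 - b.2)| := abs_pos.mpr (sub_ne_zero.mpr h)
    refine ⟨by positivity, by linarith, ?_⟩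
    constructor
    · intro h0; linarith
    · intro h0; rw [h0] at h; exact absurd rfl h
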